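/- Let q(t) be an integer Laurent polynomial. There exists a finitely supported sequence (a_i) of nonnegative integers satisfying the conditions of Theorem C (a_l = 0 for l < σ; a_σ = q_σ > 0 where q_σ t^σ is the lowest nonzero term of q; and max(q_l, 0) ≤ a_l < ∑_{i≤l} q_i for l > σ) if and only if there exists σ ∈ ℤ with ∑_{i≤l} q_i > 0 for all l ≥ σ and ∑_{i≤l} q_i = 0 for l < σ. -/
import Mathlib

lemma myS_eq_sum (q : ℤ → ℤ) (hqfin : (Function.support q).Finite) (l : ℤ) :
    ∑ᶠ i : ℤ, (if i ≤ l then q i else 0)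
      = ∑ i ∈ hqfin.toFinset, (if i ≤ l then q i else 0) := by
  apply finsum_eq_finset_sum_of_support_subset
  intro i hi
  simp only [Function.mem_support] at hi
  simp only [Set.Finite.coe_toFinset, Function.mem_support]
  intro h
  apply hi
  simp [h]

lemma myS_step (q : ℤ → ℤ) (hqfin : (Function.support q).Finite) (l : ℤ) :
    ∑ᶠ i : ℤ, (if i ≤ l then q i else 0)
      = (∑ᶠ i : ℤ, (if i ≤ l - 1 then q i else 0)) + q l := by
  rw [myS_eq_sum q hqfin, myS_eq_sum q hqfin]
  have key : ∀ i : ℤ, (if i ≤ l then q i else 0)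
      = (if i ≤ l - 1 then q i else 0) + (if i = l then q i else 0) := by
    intro i
    rcases lt_trichotomy i l with h | h | h
    · have h1 : i ≤ l := le_of_lt h
      have h2 : i ≤ l - 1 := by omega
      have h3 : i ≠ l := ne_of_lt h
      simp [h1, h2, h3]
    · subst h
      have hne : ¬ i ≤ i - 1 := by omega
      simp [hne]
    · have h1 : ¬ i ≤ l := not_le.mpr h
      have h2 : ¬ i ≤ l - 1 := by omega
      have h3 : i ≠ l := ne_of_gt h
      simp [h1, h2, h3]
  simp_rw [key]
  rw [Finset.sum_add_distrib]
  congr 1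
  rw [Finset.sum_ite_eq' hqfin.toFinset l q]
  by_cases hl : l ∈ hqfin.toFinset
  · simp [hl]
  · simp only [hl, if_false]
    have : q l = 0 := by
      by_contra h
      exact hl (hqfin.mem_toFinset.mpr h)
    omega

lemma myS_zero (q : ℤ → ℤ) (σ : ℤ) (hσmin : ∀ i : ℤ, i < σ → q i = 0)
    (l : ℤ) (hl : l < σ) :
    ∑ᶠ i : ℤ, (if i ≤ l then q i else 0) = 0 := by
  apply finsum_eq_zero_of_forall_eq_zero
  intro i
  by_cases h : i ≤ l
  · simp [h, hσmin i (lt_of_le_of_lt h hl)]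
  · simp [h]

theorem theoremC_betti_exists_iff_partial_sums_positive
    (q : ℤ → ℤ) (hqfin : (Function.support q).Finite)
    (σ : ℤ) (hσ : q σ ≠ 0) (hσmin : ∀ i : ℤ, i < σ → q i = 0) :
    (∃ a : ℤ → ℤ, (Function.support a).Finite ∧ (∀ i : ℤ, 0 ≤ a i) ∧
        (∀ l : ℤ, l < σ → a l = 0) ∧ a σ = q σ ∧ 0 < q σ ∧
        ∀ l : ℤ, σ < l →
          max (q l) 0 ≤ a l ∧ a l < ∑ᶠ i : ℤ, (if i ≤ l then q i else 0)) ↔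
      (∃ τ : ℤ, (∀ l : ℤ, τ ≤ l → 0 < ∑ᶠ i : ℤ, (if i ≤ l then q i else 0)) ∧
        ∀ l : ℤ, l < τ → ∑ᶠ i : ℤ, (if i ≤ l then q i else 0) = 0) := by
  have hSσ : ∑ᶠ i : ℤ, (if i ≤ σ then q i else 0) = q σ := by
    rw [myS_step q hqfin σ, myS_zero q σ hσmin (σ - 1) (by omega)]
    ring
  constructor
  · rintro ⟨a, _, hpos, _, _, hqσpos, hmax⟩
    refine ⟨σ, ?_, fun l hl => myS_zero q σ hσmin l hl⟩
    intro l hl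
    rcases eq_or_lt_of_le hl with h | h
    · rw [← h, hSσ]; exact hqσpos
    · exact lt_of_le_of_lt (hpos l) (hmax l h).2
  · rintro ⟨τ, h1, h2⟩
    have hτσ : τ = σ := by
      by_contra h
      rcases lt_or_gt_of_ne h with h | h
      · have := h1 (σ - 1) (by omega)
        rw [myS_zero q σ hσmin (σ - 1) (by omega)] at this
        exact lt_irrefl 0 this
      · have := h2 σ h
        rw [hSσ] at this
        exact hσ this
    rw [hτσ] at h1 h2
    clear hτσ
    have hqσpos : 0 < q σ := by
      have := h1 σ le_rfl
      rwa [hSσ] at this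
    refine ⟨fun l => if l < σ then 0 else if l = σ then q σ else max (q l) 0,
      ?_, ?_, ?_, ?_, hqσpos, ?_⟩
    · apply Set.Finite.subset hqfin
      intro i hi
      simp only [Function.mem_support] at hi ⊢
      by_cases h1' : i < σ
      · simp [h1'] at hi
      · by_cases h2' : i = σ
        · subst h2'; exact hσ
        · intro h; apply hi; simp [h1', h2', h]
    · intro i
      by_cases h1' : i < σ
      · simp [h1']
      · by_cases h2' : i = σ
        · simp [h1', h2']; omega
        · simp [h1', h2']
    · intro l hl; simp [hl]
    · simp
    · intro l hl
      have h1' : ¬ l < σ := by omega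
      have h2' : l ≠ σ := by omega
      simp only [h1', if_false, h2']
      refine ⟨le_refl _, ?_⟩
      have hprev : 0 < ∑ᶠ i : ℤ, (if i ≤ l - 1 then q i else 0) :=
        h1 (l - 1) (by omega)
      have hstep := myS_step q hqfin l
      have hSl : 0 < ∑ᶠ i : ℤ, (if i ≤ l then q i else 0) := h1 l (by omega)
      rw [max_lt_iff]
      constructor
      · omega
      · exact hSl
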